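/- arXiv:2304.02864 — 2 statements merged into one kernel-verified Lean document; each statement's English description precedes it below -/
import Mathlib

section
/- The girth of X = J(v,k,i) is given by: g(X) = 3 if v ≥ 3(k − i); g(X) = 4 if v < 3(k − i) and (v,k,i) ≠ (2k+1,k,0); g(X) = 5 if (v,k,i) = (5,2,0); and g(X) = 6 if (v,k,i) = (2k+1,k,0) with k > 2. -/
/-- The generalized Johnson graph `J(v,k,i)`: vertices are the `k`-element subsets of a
`v`-element set, two vertices adjacent iff their intersection has exactly `i` elements. -/
def genJohnsonGraph (v k i : ℕ) :
    SimpleGraph {A : Finset (Fin v) // A.card = k} where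
  Adj A B := A ≠ B ∧ (A.1 ∩ B.1).card = i
  symm := by
    refine ⟨?_⟩
    rintro A B ⟨hne, hcard⟩
    exact ⟨hne.symm, by rwa [Finset.inter_comm]⟩
  loopless := by refine ⟨?_⟩; rintro A ⟨hne, -⟩; exact hne rfl

open SimpleGraph Finset



variable {α : Type*} {G : SimpleGraph α}

lemma egirth_le' {a : α} {w : G.Walk a a} (hw : w.IsCycle) : G.egirth ≤ w.length := by
  simp only [SimpleGraph.egirth]
  exact iInf_le_of_le a (iInf_le_of_le w (iInf_le_of_le hw le_rfl))

lemma cycle3 {a : α} {w : G.Walk a a} (hc : w.IsCycle) (h3 : w.length = 3) :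
    ∃ b c, G.Adj a b ∧ G.Adj b c ∧ G.Adj c a := by
  cases w with
  | nil => simp at h3
  | cons h1 p =>
    cases p with
    | nil => simp at h3
    | cons h2 q =>
      cases q with
      | nil => simp at h3
      | cons h3' r =>
        cases r with
        | nil => exact ⟨_, _, h1, h2, h3'⟩
        | cons h4 s => simp at h3

lemma cycle4 {a : α} {w : G.Walk a a} (hc : w.IsCycle) (h4 : w.length = 4) :
    ∃ b c d, G.Adj a b ∧ G.Adj b c ∧ G.Adj c d ∧ G.Adj d a ∧ a ≠ c ∧ b ≠ d := by
  cases w with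
  | nil => simp at h4
  | cons h1 p =>
  cases p with
  | nil => simp at h4
  | cons h2 q =>
  cases q with
  | nil => simp at h4
  | cons h3 r =>
  cases r with
  | nil => simp at h4
  | cons h4' s =>
  cases s with
  | nil =>
    have hn := hc.2
    simp [SimpleGraph.Walk.support] at hn
    exact ⟨_, _, _, h1, h2, h3, h4', by tauto, by tauto⟩
  | cons h5 t => simp at h4

lemma cycle5 {a : α} {w : G.Walk a a} (hc : w.IsCycle) (h5 : w.length = 5) :
    ∃ b c d e, G.Adj a b ∧ G.Adj b c ∧ G.Adj c d ∧ G.Adj d e ∧ G.Adj e a := by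
  cases w with
  | nil => simp at h5
  | cons h1 p =>
  cases p with
  | nil => simp at h5
  | cons h2 q =>
  cases q with
  | nil => simp at h5
  | cons h3 r =>
  cases r with
  | nil => simp at h5
  | cons h4' s =>
  cases s with
  | nil => simp at h5
  | cons h5' t =>
  cases t with
  | nil => exact ⟨_, _, _, _, h1, h2, h3, h4', h5'⟩
  | cons h6 u => simp at h5

lemma mkCycle3 {a b c : α} (h1 : G.Adj a b) (h2 : G.Adj b c) (h3 : G.Adj c a) :
    ∃ w : G.Walk a a, w.IsCycle ∧ w.length = 3 := by
  refine ⟨.cons h1 (.cons h2 (.cons h3 .nil)), ?_, rfl⟩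
  have n1 := h1.ne; have n2 := h2.ne; have n3 := h3.ne
  simp [SimpleGraph.Walk.isCycle_def, SimpleGraph.Walk.isTrail_def, List.Nodup, Sym2.eq_iff]
  tauto

lemma mkCycle4 {a b c d : α} (h1 : G.Adj a b) (h2 : G.Adj b c) (h3 : G.Adj c d)
    (h4 : G.Adj d a) (hac : a ≠ c) (hbd : b ≠ d) :
    ∃ w : G.Walk a a, w.IsCycle ∧ w.length = 4 := by
  refine ⟨.cons h1 (.cons h2 (.cons h3 (.cons h4 .nil))), ?_, rfl⟩
  have n1 := h1.ne; have n2 := h2.ne; have n3 := h3.ne; have n4 := h4.ne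
  simp [SimpleGraph.Walk.isCycle_def, SimpleGraph.Walk.isTrail_def, List.Nodup, Sym2.eq_iff]
  tauto

lemma mkCycle5 {a b c d e : α} (h1 : G.Adj a b) (h2 : G.Adj b c) (h3 : G.Adj c d)
    (h4 : G.Adj d e) (h5 : G.Adj e a) (hac : a ≠ c) (had : a ≠ d) (hbd : b ≠ d)
    (hbe : b ≠ e) (hce : c ≠ e) :
    ∃ w : G.Walk a a, w.IsCycle ∧ w.length = 5 := by
  refine ⟨.cons h1 (.cons h2 (.cons h3 (.cons h4 (.cons h5 .nil)))), ?_, rfl⟩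
  have n1 := h1.ne; have n2 := h2.ne; have n3 := h3.ne; have n4 := h4.ne; have n5 := h5.ne
  simp [SimpleGraph.Walk.isCycle_def, SimpleGraph.Walk.isTrail_def, List.Nodup, Sym2.eq_iff]
  tauto

lemma mkCycle6 {a b c d e f : α} (h1 : G.Adj a b) (h2 : G.Adj b c) (h3 : G.Adj c d)
    (h4 : G.Adj d e) (h5 : G.Adj e f) (h6 : G.Adj f a) (hac : a ≠ c) (had : a ≠ d)
    (hae : a ≠ e) (hbd : b ≠ d) (hbe : b ≠ e) (hbf : b ≠ f) (hce : c ≠ e) (hcf : c ≠ f)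
    (hdf : d ≠ f) :
    ∃ w : G.Walk a a, w.IsCycle ∧ w.length = 6 := by
  refine ⟨.cons h1 (.cons h2 (.cons h3 (.cons h4 (.cons h5 (.cons h6 .nil))))), ?_, rfl⟩
  have n1 := h1.ne; have n2 := h2.ne; have n3 := h3.ne; have n4 := h4.ne
  have n5 := h5.ne; have n6 := h6.ne
  simp [SimpleGraph.Walk.isCycle_def, SimpleGraph.Walk.isTrail_def, List.Nodup, Sym2.eq_iff]
  tauto

lemma girth_eq_of {n : ℕ}
    (hlow : ∀ a (w : G.Walk a a), w.IsCycle → n ≤ w.length)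
    (hup : ∃ a, ∃ w : G.Walk a a, w.IsCycle ∧ w.length = n) : G.girth = n := by
  have h1 : G.egirth = n := by
    refine le_antisymm ?_ ?_
    · obtain ⟨a, w, hc, hl⟩ := hup
      exact (egirth_le' hc).trans (by simp [hl])
    · rw [SimpleGraph.le_egirth]
      intro a w hw
      exact_mod_cast hlow a w hw
  simp [SimpleGraph.girth, h1]

lemma attachFin_inter {v : ℕ} (s t : Finset ℕ) (hs : ∀ m ∈ s, m < v) (ht : ∀ m ∈ t, m < v) :
    s.attachFin hs ∩ t.attachFin ht
      = (s ∩ t).attachFin (fun m hm => hs m (Finset.mem_inter.mp hm).1) := by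
  ext x
  simp [Finset.mem_attachFin]

lemma attachFin_inj {v : ℕ} {s t : Finset ℕ} {hs : ∀ m ∈ s, m < v} {ht : ∀ m ∈ t, m < v}
    (h : s.attachFin hs = t.attachFin ht) : s = t := by
  ext m
  constructor
  · intro hm
    have : (⟨m, hs m hm⟩ : Fin v) ∈ s.attachFin hs := by simp [Finset.mem_attachFin, hm]
    rw [h] at this
    simpa [Finset.mem_attachFin] using this
  · intro hm
    have : (⟨m, ht m hm⟩ : Fin v) ∈ t.attachFin ht := by simp [Finset.mem_attachFin, hm]
    rw [← h] at this
    simpa [Finset.mem_attachFin] using this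

lemma jadj {v k i : ℕ} (hik : i < k) {s t : Finset ℕ} (hs : ∀ m ∈ s, m < v)
    (ht : ∀ m ∈ t, m < v) (hcs : (s.attachFin hs).card = k) (hct : (t.attachFin ht).card = k)
    (h : (s ∩ t).card = i) :
    (genJohnsonGraph v k i).Adj ⟨s.attachFin hs, hcs⟩ ⟨t.attachFin ht, hct⟩ := by
  constructor
  · intro he
    have h2 : s = t := attachFin_inj (congrArg Subtype.val he)
    rw [h2, Finset.inter_self] at h
    rw [Finset.card_attachFin] at hct
    omega
  · rw [attachFin_inter, Finset.card_attachFin, h]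

lemma no3 {v k i : ℕ} {A B C : {A : Finset (Fin v) // A.card = k}}
    (hAB : (genJohnsonGraph v k i).Adj A B) (hBC : (genJohnsonGraph v k i).Adj B C)
    (hCA : (genJohnsonGraph v k i).Adj C A) : 3 * k ≤ v + 3 * i := by
  obtain ⟨a, ha⟩ := A; obtain ⟨b, hb⟩ := B; obtain ⟨c, hc⟩ := C
  obtain ⟨-, hab⟩ := hAB; obtain ⟨-, hbc⟩ := hBC; obtain ⟨-, hca⟩ := hCA
  simp only at hab hbc hca
  have h1 : (a ∪ b).card + (a ∩ b).card = a.card + b.card :=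
    Finset.card_union_add_card_inter a b
  have h2 : (a ∪ b ∪ c).card + ((a ∪ b) ∩ c).card = (a ∪ b).card + c.card :=
    Finset.card_union_add_card_inter (a ∪ b) c
  have h3 : (a ∪ b) ∩ c = (a ∩ c) ∪ (b ∩ c) := Finset.union_inter_distrib_right a b c
  have h4 : ((a ∩ c) ∪ (b ∩ c)).card ≤ (a ∩ c).card + (b ∩ c).card :=
    Finset.card_union_le _ _
  have h5 : (a ∪ b ∪ c).card ≤ v := by
    have := Finset.card_le_univ (a ∪ b ∪ c)
    simpa using this
  have hac : (a ∩ c).card = i := by rw [Finset.inter_comm]; exact hca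
  have h3' : ((a ∪ b) ∩ c).card = ((a ∩ c) ∪ (b ∩ c)).card := by rw [h3]
  omega

lemma card_inter_lt {v k : ℕ} {a c : Finset (Fin v)} (ha : a.card = k) (hc : c.card = k)
    (hne : a ≠ c) : (a ∩ c).card + 1 ≤ k := by
  by_contra h
  push_neg at h
  have h1 : a = a ∩ c := (Finset.eq_of_subset_of_card_le (Finset.inter_subset_left) (by omega)).symm
  have h2 : c = a ∩ c := (Finset.eq_of_subset_of_card_le (Finset.inter_subset_right) (by omega)).symm
  exact hne (h1.trans h2.symm)

lemma no4 {v k : ℕ} (hv : v = 2 * k + 1) {A B C D : {A : Finset (Fin v) // A.card = k}}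
    (hAB : (genJohnsonGraph v k 0).Adj A B) (hBC : (genJohnsonGraph v k 0).Adj B C)
    (hCD : (genJohnsonGraph v k 0).Adj C D) (hDA : (genJohnsonGraph v k 0).Adj D A)
    (hAC : A ≠ C) (hBD : B ≠ D) : False := by
  obtain ⟨a, ha⟩ := A; obtain ⟨b, hb⟩ := B; obtain ⟨c, hc⟩ := C; obtain ⟨d, hd⟩ := D
  obtain ⟨-, hab⟩ := hAB; obtain ⟨-, hbc⟩ := hBC; obtain ⟨-, hcd⟩ := hCD; obtain ⟨-, hda⟩ := hDA
  simp only at hab hbc hcd hda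
  have hac : a ≠ c := fun h => hAC (by simpa using h)
  have hbd : b ≠ d := fun h => hBD (by simpa using h)
  rw [Finset.card_eq_zero] at hab hbc hcd hda
  have h1 : (a ∩ c).card + 1 ≤ k := card_inter_lt ha hc hac
  have h2 : (b ∩ d).card + 1 ≤ k := card_inter_lt hb hd hbd
  have h3 : (a ∪ c).card + (a ∩ c).card = a.card + c.card := Finset.card_union_add_card_inter a c
  have h4 : (b ∪ d).card + (b ∩ d).card = b.card + d.card := Finset.card_union_add_card_inter b d
  have hdisj : Disjoint (a ∪ c) (b ∪ d) := by
    simp only [Finset.disjoint_union_left, Finset.disjoint_union_right]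
    refine ⟨⟨?_, ?_⟩, ⟨?_, ?_⟩⟩ <;> rw [Finset.disjoint_iff_inter_eq_empty]
    · exact hab
    · rw [Finset.inter_comm]; exact hbc
    · rw [Finset.inter_comm]; exact hda
    · exact hcd
  have h5 : ((a ∪ c) ∪ (b ∪ d)).card = (a ∪ c).card + (b ∪ d).card :=
    Finset.card_union_of_disjoint hdisj
  have h6 : ((a ∪ c) ∪ (b ∪ d)).card ≤ v := by simpa using Finset.card_le_univ ((a ∪ c) ∪ (b ∪ d))
  omega

lemma no5 {v k : ℕ} (hv : v = 2 * k + 1) (hk : 2 < k) {A B C D E : {A : Finset (Fin v) // A.card = k}}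
    (hAB : (genJohnsonGraph v k 0).Adj A B) (hBC : (genJohnsonGraph v k 0).Adj B C)
    (hCD : (genJohnsonGraph v k 0).Adj C D) (hDE : (genJohnsonGraph v k 0).Adj D E)
    (hEA : (genJohnsonGraph v k 0).Adj E A) : False := by
  obtain ⟨a, ha⟩ := A; obtain ⟨b, hb⟩ := B; obtain ⟨c, hc⟩ := C; obtain ⟨d, hd⟩ := D
  obtain ⟨e, he⟩ := E
  obtain ⟨-, hab⟩ := hAB; obtain ⟨-, hbc⟩ := hBC; obtain ⟨-, hcd⟩ := hCD
  obtain ⟨-, hde⟩ := hDE; obtain ⟨-, hea⟩ := hEA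
  simp only at hab hbc hcd hde hea
  rw [Finset.card_eq_zero] at hab hbc hcd hde hea
  -- |a ∪ c| ≤ k + 1 since a ∪ c ⊆ bᶜ
  have hsub1 : a ∪ c ⊆ bᶜ := by
    intro x hx
    rw [Finset.mem_compl]
    rcases Finset.mem_union.mp hx with h | h
    · intro hxb; exact absurd (Finset.mem_inter.mpr ⟨h, hxb⟩) (by simp [hab])
    · intro hxb; exact absurd (Finset.mem_inter.mpr ⟨hxb, h⟩) (by simp [hbc])
  have hsub2 : c ∪ e ⊆ dᶜ := by
    intro x hx
    rw [Finset.mem_compl]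
    rcases Finset.mem_union.mp hx with h | h
    · intro hxd; exact absurd (Finset.mem_inter.mpr ⟨h, hxd⟩) (by simp [hcd])
    · intro hxd; exact absurd (Finset.mem_inter.mpr ⟨hxd, h⟩) (by simp [hde])
  have hb1 : (a ∪ c).card ≤ k + 1 := by
    have := Finset.card_le_card hsub1
    rw [Finset.card_compl, Fintype.card_fin, hb] at this
    omega
  have hb2 : (c ∪ e).card ≤ k + 1 := by
    have := Finset.card_le_card hsub2
    rw [Finset.card_compl, Fintype.card_fin, hd] at this
    omega
  have h3 : (a ∪ c).card + (a ∩ c).card = a.card + c.card := Finset.card_union_add_card_inter a c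
  have h4 : (c ∪ e).card + (c ∩ e).card = c.card + e.card := Finset.card_union_add_card_inter c e
  have hdisj : Disjoint (a ∩ c) (c ∩ e) := by
    rw [Finset.disjoint_left]
    intro x hx hx'
    have : x ∈ e ∩ a := Finset.mem_inter.mpr ⟨(Finset.mem_inter.mp hx').2, (Finset.mem_inter.mp hx).1⟩
    rw [hea] at this
    simp at this
  have h5 : ((a ∩ c) ∪ (c ∩ e)).card = (a ∩ c).card + (c ∩ e).card :=
    Finset.card_union_of_disjoint hdisj
  have h6 : ((a ∩ c) ∪ (c ∩ e)).card ≤ k := by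
    rw [← hc]
    exact Finset.card_le_card (by
      intro x hx
      rcases Finset.mem_union.mp hx with h | h
      · exact (Finset.mem_inter.mp h).2
      · exact (Finset.mem_inter.mp h).1)
  omega

def IcoU (p q r u : ℕ) : Finset ℕ := Finset.Ico p q ∪ Finset.Ico r u

lemma IcoU_card {p q r u : ℕ} (h : q ≤ r) : (IcoU p q r u).card = (q - p) + (u - r) := by
  rw [IcoU, Finset.card_union_of_disjoint
    (by simp only [Finset.disjoint_left, Finset.mem_Ico]; omega), Nat.card_Ico, Nat.card_Ico]

lemma IcoU_bound {v p q r u : ℕ} (h1 : q ≤ v) (h2 : u ≤ v) : ∀ m ∈ IcoU p q r u, m < v := by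
  intro m hm
  simp only [IcoU, Finset.mem_union, Finset.mem_Ico] at hm
  omega

lemma jne {v k : ℕ} {s t : Finset ℕ} (hs : ∀ m ∈ s, m < v) (ht : ∀ m ∈ t, m < v)
    (hcs : (s.attachFin hs).card = k) (hct : (t.attachFin ht).card = k) (h : s ≠ t) :
    (⟨s.attachFin hs, hcs⟩ : {A : Finset (Fin v) // A.card = k}) ≠ ⟨t.attachFin ht, hct⟩ :=
  fun he => h (attachFin_inj (congrArg Subtype.val he))

lemma case1_up (v k i : ℕ) (hik : i < k) (h2k : 2*k ≤ v) (h3 : 3*(k-i) ≤ v) :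
    ∃ A, ∃ w : (genJohnsonGraph v k i).Walk A A, w.IsCycle ∧ w.length = 3 := by
  obtain ⟨a, ha⟩ : ∃ a, k = i + a := ⟨k - i, by omega⟩
  have ha1 : 1 ≤ a := by omega
  rcases le_or_gt i a with hia | hia
  · -- i ≤ a, ground 3a ≤ v
    have hg : 3*a ≤ v := by omega
    have bA := IcoU_bound (v := v) (p := 0) (q := i) (r := 2*i) (u := 2*i+a)
      (by omega) (by omega)
    have bB := IcoU_bound (v := v) (p := 0) (q := 2*i) (r := 2*i+a) (u := i+2*a)
      (by omega) (by omega)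
    have bC := IcoU_bound (v := v) (p := i) (q := 3*i) (r := i+2*a) (u := 3*a)
      (by omega) (by omega)
    have cA : ((IcoU 0 i (2*i) (2*i+a)).attachFin bA).card = k := by
      rw [Finset.card_attachFin, IcoU_card (by omega)]; omega
    have cB : ((IcoU 0 (2*i) (2*i+a) (i+2*a)).attachFin bB).card = k := by
      rw [Finset.card_attachFin, IcoU_card (by omega)]; omega
    have cC : ((IcoU i (3*i) (i+2*a) (3*a)).attachFin bC).card = k := by
      rw [Finset.card_attachFin, IcoU_card (by omega)]; omega
    have iAB : (IcoU 0 i (2*i) (2*i+a) ∩ IcoU 0 (2*i) (2*i+a) (i+2*a)).card = i := by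
      rw [show IcoU 0 i (2*i) (2*i+a) ∩ IcoU 0 (2*i) (2*i+a) (i+2*a) = IcoU 0 i i i from by
        ext m; simp only [IcoU, Finset.mem_inter, Finset.mem_union, Finset.mem_Ico]; omega,
        IcoU_card (by omega)]
      omega
    have iBC : (IcoU 0 (2*i) (2*i+a) (i+2*a) ∩ IcoU i (3*i) (i+2*a) (3*a)).card = i := by
      rw [show IcoU 0 (2*i) (2*i+a) (i+2*a) ∩ IcoU i (3*i) (i+2*a) (3*a) = IcoU i (2*i) (2*i) (2*i) from by
        ext m; simp only [IcoU, Finset.mem_inter, Finset.mem_union, Finset.mem_Ico]; omega,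
        IcoU_card (by omega)]
      omega
    have iCA : (IcoU i (3*i) (i+2*a) (3*a) ∩ IcoU 0 i (2*i) (2*i+a)).card = i := by
      rw [show IcoU i (3*i) (i+2*a) (3*a) ∩ IcoU 0 i (2*i) (2*i+a) = IcoU (2*i) (3*i) (3*i) (3*i) from by
        ext m; simp only [IcoU, Finset.mem_inter, Finset.mem_union, Finset.mem_Ico]; omega,
        IcoU_card (by omega)]
      omega
    exact ⟨⟨_, cA⟩, mkCycle3 (jadj hik bA bB cA cB iAB) (jadj hik bB bC cB cC iBC)
      (jadj hik bC bA cC cA iCA)⟩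
  · -- a < i, ground i + 2a ≤ 2k ≤ v
    have hg : i + 2*a ≤ v := by omega
    have bA := IcoU_bound (v := v) (p := 0) (q := i) (r := i+a) (u := i+2*a)
      (by omega) (by omega)
    have bB := IcoU_bound (v := v) (p := 0) (q := i+a) (r := i+a) (u := i+a)
      (by omega) (by omega)
    have bC := IcoU_bound (v := v) (p := 0) (q := i-a) (r := i) (u := i+2*a)
      (by omega) (by omega)
    have cA : ((IcoU 0 i (i+a) (i+2*a)).attachFin bA).card = k := by
      rw [Finset.card_attachFin, IcoU_card (by omega)]; omega
    have cB : ((IcoU 0 (i+a) (i+a) (i+a)).attachFin bB).card = k := by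
      rw [Finset.card_attachFin, IcoU_card (by omega)]; omega
    have cC : ((IcoU 0 (i-a) i (i+2*a)).attachFin bC).card = k := by
      rw [Finset.card_attachFin, IcoU_card (by omega)]; omega
    have iAB : (IcoU 0 i (i+a) (i+2*a) ∩ IcoU 0 (i+a) (i+a) (i+a)).card = i := by
      rw [show IcoU 0 i (i+a) (i+2*a) ∩ IcoU 0 (i+a) (i+a) (i+a) = IcoU 0 i i i from by
        ext m; simp only [IcoU, Finset.mem_inter, Finset.mem_union, Finset.mem_Ico]; omega,
        IcoU_card (by omega)]
      omega
    have iBC : (IcoU 0 (i+a) (i+a) (i+a) ∩ IcoU 0 (i-a) i (i+2*a)).card = i := by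
      rw [show IcoU 0 (i+a) (i+a) (i+a) ∩ IcoU 0 (i-a) i (i+2*a) = IcoU 0 (i-a) i (i+a) from by
        ext m; simp only [IcoU, Finset.mem_inter, Finset.mem_union, Finset.mem_Ico]; omega,
        IcoU_card (by omega)]
      omega
    have iCA : (IcoU 0 (i-a) i (i+2*a) ∩ IcoU 0 i (i+a) (i+2*a)).card = i := by
      rw [show IcoU 0 (i-a) i (i+2*a) ∩ IcoU 0 i (i+a) (i+2*a) = IcoU 0 (i-a) (i+a) (i+2*a) from by
        ext m; simp only [IcoU, Finset.mem_inter, Finset.mem_union, Finset.mem_Ico]; omega,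
        IcoU_card (by omega)]
      omega
    exact ⟨⟨_, cA⟩, mkCycle3 (jadj hik bA bB cA cB iAB) (jadj hik bB bC cB cC iBC)
      (jadj hik bC bA cC cA iCA)⟩

lemma case2_up (v k i : ℕ) (hik : i < k) (h2k : 2*k ≤ v) (h3 : v < 3*(k-i))
    (hne1 : ¬(v = 2*k + 1 ∧ i = 0)) (hexc : ¬(v = 2*k ∧ i = 0)) :
    ∃ A, ∃ w : (genJohnsonGraph v k i).Walk A A, w.IsCycle ∧ w.length = 4 := by
  obtain ⟨a, ha⟩ : ∃ a, k = i + a := ⟨k - i, by omega⟩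
  rcases Nat.eq_zero_or_pos i with hi0 | hi1
  · -- i = 0, v ≥ 2k + 2
    subst hi0
    have hv : 2*k + 2 ≤ v := by
      have h1 : v ≠ 2*k := fun h => hexc ⟨h, rfl⟩
      have h2 : v ≠ 2*k+1 := fun h => hne1 ⟨h, rfl⟩
      omega
    have bA := IcoU_bound (v := v) (p := 0) (q := k) (r := k) (u := k) (by omega) (by omega)
    have bB := IcoU_bound (v := v) (p := k) (q := 2*k) (r := 2*k) (u := 2*k) (by omega) (by omega)
    have bC := IcoU_bound (v := v) (p := 1) (q := k) (r := 2*k) (u := 2*k+1) (by omega) (by omega)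
    have bD := IcoU_bound (v := v) (p := k+1) (q := 2*k) (r := 2*k+1) (u := 2*k+2)
      (by omega) (by omega)
    have cA : ((IcoU 0 k k k).attachFin bA).card = k := by
      rw [Finset.card_attachFin, IcoU_card (by omega)]; omega
    have cB : ((IcoU k (2*k) (2*k) (2*k)).attachFin bB).card = k := by
      rw [Finset.card_attachFin, IcoU_card (by omega)]; omega
    have cC : ((IcoU 1 k (2*k) (2*k+1)).attachFin bC).card = k := by
      rw [Finset.card_attachFin, IcoU_card (by omega)]; omega
    have cD : ((IcoU (k+1) (2*k) (2*k+1) (2*k+2)).attachFin bD).card = k := by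
      rw [Finset.card_attachFin, IcoU_card (by omega)]; omega
    have iAB : (IcoU 0 k k k ∩ IcoU k (2*k) (2*k) (2*k)).card = 0 := by
      rw [show IcoU 0 k k k ∩ IcoU k (2*k) (2*k) (2*k) = IcoU 0 0 0 0 from by
        ext m; simp only [IcoU, Finset.mem_inter, Finset.mem_union, Finset.mem_Ico]; omega,
        IcoU_card (by omega)]
    have iBC : (IcoU k (2*k) (2*k) (2*k) ∩ IcoU 1 k (2*k) (2*k+1)).card = 0 := by
      rw [show IcoU k (2*k) (2*k) (2*k) ∩ IcoU 1 k (2*k) (2*k+1) = IcoU 0 0 0 0 from by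
        ext m; simp only [IcoU, Finset.mem_inter, Finset.mem_union, Finset.mem_Ico]; omega,
        IcoU_card (by omega)]
    have iCD : (IcoU 1 k (2*k) (2*k+1) ∩ IcoU (k+1) (2*k) (2*k+1) (2*k+2)).card = 0 := by
      rw [show IcoU 1 k (2*k) (2*k+1) ∩ IcoU (k+1) (2*k) (2*k+1) (2*k+2) = IcoU 0 0 0 0 from by
        ext m; simp only [IcoU, Finset.mem_inter, Finset.mem_union, Finset.mem_Ico]; omega,
        IcoU_card (by omega)]
    have iDA : (IcoU (k+1) (2*k) (2*k+1) (2*k+2) ∩ IcoU 0 k k k).card = 0 := by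
      rw [show IcoU (k+1) (2*k) (2*k+1) (2*k+2) ∩ IcoU 0 k k k = IcoU 0 0 0 0 from by
        ext m; simp only [IcoU, Finset.mem_inter, Finset.mem_union, Finset.mem_Ico]; omega,
        IcoU_card (by omega)]
    refine ⟨⟨_, cA⟩, mkCycle4 (jadj hik bA bB cA cB iAB) (jadj hik bB bC cB cC iBC)
      (jadj hik bC bD cC cD iCD) (jadj hik bD bA cD cA iDA) (jne bA bC cA cC ?_)
      (jne bB bD cB cD ?_)⟩
    · intro h
      have := Finset.ext_iff.mp h 0
      simp only [IcoU, Finset.mem_union, Finset.mem_Ico] at this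
      omega
    · intro h
      have := Finset.ext_iff.mp h k
      simp only [IcoU, Finset.mem_union, Finset.mem_Ico] at this
      omega
  · -- i ≥ 1, ground 2k = 2i + 2a, need a > 2i
    have hai : 2*i < a := by omega
    have bA := IcoU_bound (v := v) (p := 0) (q := i) (r := 2*i) (u := 2*i+a) (by omega) (by omega)
    have bB := IcoU_bound (v := v) (p := 0) (q := i) (r := 2*i+a) (u := 2*i+2*a)
      (by omega) (by omega)
    have bC := IcoU_bound (v := v) (p := i) (q := i+a) (r := 2*i+a) (u := 3*i+a)
      (by omega) (by omega)
    have bD := IcoU_bound (v := v) (p := 0) (q := 2*i) (r := 3*i+a) (u := 2*i+2*a)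
      (by omega) (by omega)
    have cA : ((IcoU 0 i (2*i) (2*i+a)).attachFin bA).card = k := by
      rw [Finset.card_attachFin, IcoU_card (by omega)]; omega
    have cB : ((IcoU 0 i (2*i+a) (2*i+2*a)).attachFin bB).card = k := by
      rw [Finset.card_attachFin, IcoU_card (by omega)]; omega
    have cC : ((IcoU i (i+a) (2*i+a) (3*i+a)).attachFin bC).card = k := by
      rw [Finset.card_attachFin, IcoU_card (by omega)]; omega
    have cD : ((IcoU 0 (2*i) (3*i+a) (2*i+2*a)).attachFin bD).card = k := by
      rw [Finset.card_attachFin, IcoU_card (by omega)]; omega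
    have iAB : (IcoU 0 i (2*i) (2*i+a) ∩ IcoU 0 i (2*i+a) (2*i+2*a)).card = i := by
      rw [show IcoU 0 i (2*i) (2*i+a) ∩ IcoU 0 i (2*i+a) (2*i+2*a) = IcoU 0 i i i from by
        ext m; simp only [IcoU, Finset.mem_inter, Finset.mem_union, Finset.mem_Ico]; omega,
        IcoU_card (by omega)]
      omega
    have iBC : (IcoU 0 i (2*i+a) (2*i+2*a) ∩ IcoU i (i+a) (2*i+a) (3*i+a)).card = i := by
      rw [show IcoU 0 i (2*i+a) (2*i+2*a) ∩ IcoU i (i+a) (2*i+a) (3*i+a)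
          = IcoU (2*i+a) (3*i+a) (3*i+a) (3*i+a) from by
        ext m; simp only [IcoU, Finset.mem_inter, Finset.mem_union, Finset.mem_Ico]; omega,
        IcoU_card (by omega)]
      omega
    have iCD : (IcoU i (i+a) (2*i+a) (3*i+a) ∩ IcoU 0 (2*i) (3*i+a) (2*i+2*a)).card = i := by
      rw [show IcoU i (i+a) (2*i+a) (3*i+a) ∩ IcoU 0 (2*i) (3*i+a) (2*i+2*a)
          = IcoU i (2*i) (2*i) (2*i) from by
        ext m; simp only [IcoU, Finset.mem_inter, Finset.mem_union, Finset.mem_Ico]; omega,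
        IcoU_card (by omega)]
      omega
    have iDA : (IcoU 0 (2*i) (3*i+a) (2*i+2*a) ∩ IcoU 0 i (2*i) (2*i+a)).card = i := by
      rw [show IcoU 0 (2*i) (3*i+a) (2*i+2*a) ∩ IcoU 0 i (2*i) (2*i+a) = IcoU 0 i i i from by
        ext m; simp only [IcoU, Finset.mem_inter, Finset.mem_union, Finset.mem_Ico]; omega,
        IcoU_card (by omega)]
      omega
    refine ⟨⟨_, cA⟩, mkCycle4 (jadj hik bA bB cA cB iAB) (jadj hik bB bC cB cC iBC)
      (jadj hik bC bD cC cD iCD) (jadj hik bD bA cD cA iDA) (jne bA bC cA cC ?_)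
      (jne bB bD cB cD ?_)⟩
    · intro h
      have := Finset.ext_iff.mp h 0
      simp only [IcoU, Finset.mem_union, Finset.mem_Ico] at this
      omega
    · intro h
      have := Finset.ext_iff.mp h i
      simp only [IcoU, Finset.mem_union, Finset.mem_Ico] at this
      omega

lemma case4_up (v k : ℕ) (hk : 2 < k) (hv : v = 2*k+1) :
    ∃ A, ∃ w : (genJohnsonGraph v k 0).Walk A A, w.IsCycle ∧ w.length = 6 := by
  have hik : 0 < k := by omega
  have bA := IcoU_bound (v := v) (p := 0) (q := k) (r := k) (u := k) (by omega) (by omega)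
  have bB := IcoU_bound (v := v) (p := k) (q := 2*k) (r := 2*k) (u := 2*k) (by omega) (by omega)
  have bC := IcoU_bound (v := v) (p := 1) (q := k) (r := 2*k) (u := 2*k+1) (by omega) (by omega)
  have bD := IcoU_bound (v := v) (p := 0) (q := 1) (r := k+1) (u := 2*k) (by omega) (by omega)
  have bE := IcoU_bound (v := v) (p := 1) (q := k+1) (r := k+1) (u := k+1) (by omega) (by omega)
  have bF := IcoU_bound (v := v) (p := k+1) (q := 2*k+1) (r := 2*k+1) (u := 2*k+1)
    (by omega) (by omega)
  have cA : ((IcoU 0 k k k).attachFin bA).card = k := by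
    rw [Finset.card_attachFin, IcoU_card (by omega)]; omega
  have cB : ((IcoU k (2*k) (2*k) (2*k)).attachFin bB).card = k := by
    rw [Finset.card_attachFin, IcoU_card (by omega)]; omega
  have cC : ((IcoU 1 k (2*k) (2*k+1)).attachFin bC).card = k := by
    rw [Finset.card_attachFin, IcoU_card (by omega)]; omega
  have cD : ((IcoU 0 1 (k+1) (2*k)).attachFin bD).card = k := by
    rw [Finset.card_attachFin, IcoU_card (by omega)]; omega
  have cE : ((IcoU 1 (k+1) (k+1) (k+1)).attachFin bE).card = k := by
    rw [Finset.card_attachFin, IcoU_card (by omega)]; omega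
  have cF : ((IcoU (k+1) (2*k+1) (2*k+1) (2*k+1)).attachFin bF).card = k := by
    rw [Finset.card_attachFin, IcoU_card (by omega)]; omega
  have iAB : (IcoU 0 k k k ∩ IcoU k (2*k) (2*k) (2*k)).card = 0 := by
    rw [show IcoU 0 k k k ∩ IcoU k (2*k) (2*k) (2*k) = IcoU 0 0 0 0 from by
      ext m; simp only [IcoU, Finset.mem_inter, Finset.mem_union, Finset.mem_Ico]; omega,
      IcoU_card (by omega)]
  have iBC : (IcoU k (2*k) (2*k) (2*k) ∩ IcoU 1 k (2*k) (2*k+1)).card = 0 := by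
    rw [show IcoU k (2*k) (2*k) (2*k) ∩ IcoU 1 k (2*k) (2*k+1) = IcoU 0 0 0 0 from by
      ext m; simp only [IcoU, Finset.mem_inter, Finset.mem_union, Finset.mem_Ico]; omega,
      IcoU_card (by omega)]
  have iCD : (IcoU 1 k (2*k) (2*k+1) ∩ IcoU 0 1 (k+1) (2*k)).card = 0 := by
    rw [show IcoU 1 k (2*k) (2*k+1) ∩ IcoU 0 1 (k+1) (2*k) = IcoU 0 0 0 0 from by
      ext m; simp only [IcoU, Finset.mem_inter, Finset.mem_union, Finset.mem_Ico]; omega,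
      IcoU_card (by omega)]
  have iDE : (IcoU 0 1 (k+1) (2*k) ∩ IcoU 1 (k+1) (k+1) (k+1)).card = 0 := by
    rw [show IcoU 0 1 (k+1) (2*k) ∩ IcoU 1 (k+1) (k+1) (k+1) = IcoU 0 0 0 0 from by
      ext m; simp only [IcoU, Finset.mem_inter, Finset.mem_union, Finset.mem_Ico]; omega,
      IcoU_card (by omega)]
  have iEF : (IcoU 1 (k+1) (k+1) (k+1) ∩ IcoU (k+1) (2*k+1) (2*k+1) (2*k+1)).card = 0 := by
    rw [show IcoU 1 (k+1) (k+1) (k+1) ∩ IcoU (k+1) (2*k+1) (2*k+1) (2*k+1) = IcoU 0 0 0 0 from by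
      ext m; simp only [IcoU, Finset.mem_inter, Finset.mem_union, Finset.mem_Ico]; omega,
      IcoU_card (by omega)]
  have iFA : (IcoU (k+1) (2*k+1) (2*k+1) (2*k+1) ∩ IcoU 0 k k k).card = 0 := by
    rw [show IcoU (k+1) (2*k+1) (2*k+1) (2*k+1) ∩ IcoU 0 k k k = IcoU 0 0 0 0 from by
      ext m; simp only [IcoU, Finset.mem_inter, Finset.mem_union, Finset.mem_Ico]; omega,
      IcoU_card (by omega)]
  refine ⟨⟨_, cA⟩, mkCycle6 (jadj hik bA bB cA cB iAB) (jadj hik bB bC cB cC iBC)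
    (jadj hik bC bD cC cD iCD) (jadj hik bD bE cD cE iDE) (jadj hik bE bF cE cF iEF)
    (jadj hik bF bA cF cA iFA)
    (jne bA bC cA cC ?_) (jne bA bD cA cD ?_) (jne bA bE cA cE ?_)
    (jne bB bD cB cD ?_) (jne bB bE cB cE ?_) (jne bB bF cB cF ?_)
    (jne bC bE cC cE ?_) (jne bC bF cC cF ?_) (jne bD bF cD cF ?_)⟩ <;>
    [skip; skip; skip; skip; skip; skip; skip; skip; skip] <;> intro h
  · have := Finset.ext_iff.mp h 0
    simp only [IcoU, Finset.mem_union, Finset.mem_Ico] at this; omega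
  · have := Finset.ext_iff.mp h 1
    simp only [IcoU, Finset.mem_union, Finset.mem_Ico] at this; omega
  · have := Finset.ext_iff.mp h 0
    simp only [IcoU, Finset.mem_union, Finset.mem_Ico] at this; omega
  · have := Finset.ext_iff.mp h k
    simp only [IcoU, Finset.mem_union, Finset.mem_Ico] at this; omega
  · have := Finset.ext_iff.mp h (2*k-1)
    simp only [IcoU, Finset.mem_union, Finset.mem_Ico] at this; omega
  · have := Finset.ext_iff.mp h k
    simp only [IcoU, Finset.mem_union, Finset.mem_Ico] at this; omega
  · have := Finset.ext_iff.mp h (2*k)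
    simp only [IcoU, Finset.mem_union, Finset.mem_Ico] at this; omega
  · have := Finset.ext_iff.mp h 1
    simp only [IcoU, Finset.mem_union, Finset.mem_Ico] at this; omega
  · have := Finset.ext_iff.mp h 0
    simp only [IcoU, Finset.mem_union, Finset.mem_Ico] at this; omega

lemma case3_up :
    ∃ A, ∃ w : (genJohnsonGraph 5 2 0).Walk A A, w.IsCycle ∧ w.length = 5 := by
  refine ⟨⟨{0, 1}, by decide⟩, mkCycle5 (b := ⟨{2, 3}, by decide⟩) (c := ⟨{4, 0}, by decide⟩)
    (d := ⟨{1, 2}, by decide⟩) (e := ⟨{3, 4}, by decide⟩)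
    ⟨by decide, by decide⟩ ⟨by decide, by decide⟩ ⟨by decide, by decide⟩
    ⟨by decide, by decide⟩ ⟨by decide, by decide⟩
    (by decide) (by decide) (by decide) (by decide) (by decide)⟩

/-- The girth of `J(v,k,i)`: 3 if `v ≥ 3(k-i)`; 4 if `v < 3(k-i)` and
`(v,k,i) ≠ (2k+1,k,0)`; 5 if `(v,k,i) = (5,2,0)`; 6 if `(v,k,i) = (2k+1,k,0)` and `k > 2`. -/
theorem girth_formula (v k i : ℕ) (hik : i < k) (hkv : k < v)
    (h2k : 2 * k ≤ v) (hexc : ¬(v = 2 * k ∧ i = 0)) :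
    (3 * (k - i) ≤ v → (genJohnsonGraph v k i).girth = 3) ∧
    (v < 3 * (k - i) → ¬(v = 2 * k + 1 ∧ i = 0) →
      (genJohnsonGraph v k i).girth = 4) ∧
    (v = 5 ∧ k = 2 ∧ i = 0 → (genJohnsonGraph v k i).girth = 5) ∧
    (v = 2 * k + 1 ∧ i = 0 ∧ 2 < k → (genJohnsonGraph v k i).girth = 6) := by
  refine ⟨fun h3 => ?_, fun h3 hne1 => ?_, fun ⟨hv, hk, hi⟩ => ?_, fun ⟨hv, hi, hk⟩ => ?_⟩
  · exact girth_eq_of (fun a w hc => hc.three_le_length) (case1_up v k i hik h2k h3)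
  · refine girth_eq_of ?_ (case2_up v k i hik h2k h3 hne1 hexc)
    intro a w hc
    by_contra hlt
    push_neg at hlt
    have h3l := hc.three_le_length
    have hl3 : w.length = 3 := by omega
    obtain ⟨b, c, h1, h2, h3'⟩ := cycle3 hc hl3
    have := no3 h1 h2 h3'
    omega
  · subst hv hk hi
    refine girth_eq_of ?_ case3_up
    intro a w hc
    by_contra hlt
    push_neg at hlt
    have h3l := hc.three_le_length
    have : w.length = 3 ∨ w.length = 4 := by omega
    rcases this with h | h
    · obtain ⟨b, c, h1, h2, h3'⟩ := cycle3 hc h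
      have := no3 h1 h2 h3'
      omega
    · obtain ⟨b, c, d, h1, h2, h3', h4, hac, hbd⟩ := cycle4 hc h
      exact no4 (v := 5) (k := 2) (by norm_num) h1 h2 h3' h4 hac hbd
  · subst hi hv
    refine girth_eq_of ?_ (case4_up (2*k+1) k hk rfl)
    intro a w hc
    by_contra hlt
    push_neg at hlt
    have h3l := hc.three_le_length
    have : w.length = 3 ∨ w.length = 4 ∨ w.length = 5 := by omega
    rcases this with h | h | h
    · obtain ⟨b, c, h1, h2, h3'⟩ := cycle3 hc h
      have := no3 h1 h2 h3'
      omega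
    · obtain ⟨b, c, d, h1, h2, h3', h4, hac, hbd⟩ := cycle4 hc h
      exact no4 rfl h1 h2 h3' h4 hac hbd
    · obtain ⟨b, c, d, e, h1, h2, h3', h4, h5⟩ := cycle5 hc h
      exact no5 rfl hk h1 h2 h3' h4 h5
end

section
/- Let A and B be vertices of X = J(v,k,i) and let x = |A ∩ B|. If x < i and x < k − Δ, then the distance between A and B in X equals 3. -/
/-- No common neighbor: if `x + Δ < k`, no `C` can be adjacent to both `A` and `B`. -/
lemma no_common_neighbor (v k i : ℕ) (h2k : 2 * k ≤ v)
    (A B C : Finset (Fin v)) (hA : A.card = k) (hB : B.card = k) (hC : C.card = k)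
    (hCA : (C ∩ A).card = i) (hCB : (C ∩ B).card = i)
    (hxd : (A ∩ B).card < k - (v - 2 * k + 2 * i)) : False := by
  have h1 : (C ∩ (A ∪ B)).card + (C \ (A ∪ B)).card = C.card :=
    Finset.card_inter_add_card_sdiff C (A ∪ B)
  have h2 : (C ∩ (A ∪ B)).card ≤ 2 * i := by
    rw [Finset.inter_union_distrib_left]
    calc ((C ∩ A) ∪ (C ∩ B)).card ≤ (C ∩ A).card + (C ∩ B).card := Finset.card_union_le _ _
      _ = 2 * i := by omega
  have h3 : (C \ (A ∪ B)).card ≤ ((A ∪ B)ᶜ : Finset (Fin v)).card := by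
    apply Finset.card_le_card
    intro a ha
    simp only [Finset.mem_sdiff] at ha
    simpa using ha.2
  have h4 : ((A ∪ B)ᶜ : Finset (Fin v)).card = v - (A ∪ B).card := by
    rw [Finset.card_compl, Fintype.card_fin]
  have h5 : (A ∪ B).card + (A ∩ B).card = A.card + B.card :=
    Finset.card_union_add_card_inter A B
  omega

/-- If `x = |A ∩ B| < i` and `x < k - Δ`, then `dist(A,B) = 3` in `J(v,k,i)`. -/
theorem dist_eq_three (v k i : ℕ) (hik : i < k) (hkv : k < v)
    (h2k : 2 * k ≤ v) (hexc : ¬(v = 2 * k ∧ i = 0))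
    (A B : {A : Finset (Fin v) // A.card = k})
    (hxi : (A.1 ∩ B.1).card < i)
    (hxd : (A.1 ∩ B.1).card < k - (v - 2 * k + 2 * i)) :
    (genJohnsonGraph v k i).dist A B = 3 := by
  set x := (A.1 ∩ B.1).card with hx
  have hA : A.1.card = k := A.2
  have hB : B.1.card = k := B.2
  have hkey : x + (v - 2 * k) + 2 * i < k := by omega
  -- |A \ B| = k - x, |B \ A| = k - x
  have hAB : (A.1 ∩ B.1).card + (A.1 \ B.1).card = A.1.card :=
    Finset.card_inter_add_card_sdiff A.1 B.1
  have hBA : (B.1 ∩ A.1).card + (B.1 \ A.1).card = B.1.card :=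
    Finset.card_inter_add_card_sdiff B.1 A.1
  have hBAx : (B.1 ∩ A.1).card = x := by rw [Finset.inter_comm]
  -- choose S ⊆ A \ B with |S| = i
  obtain ⟨S, hS, hScard⟩ := Finset.exists_subset_card_eq
    (show i ≤ (A.1 \ B.1).card by rw [hA] at hAB; omega)
  -- choose T ⊆ B \ A with |T| = k - i
  obtain ⟨T, hT, hTcard⟩ := Finset.exists_subset_card_eq
    (show k - i ≤ (B.1 \ A.1).card by rw [hB] at hBA; omega)
  have hSA : S ⊆ A.1 := hS.trans (Finset.sdiff_subset)
  have hTB : T ⊆ B.1 := hT.trans (Finset.sdiff_subset)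
  have hSB : S ∩ B.1 = ∅ := by
    apply Finset.eq_empty_of_forall_notMem
    intro a ha
    rw [Finset.mem_inter] at ha
    exact (Finset.mem_sdiff.mp (hS ha.1)).2 ha.2
  have hTA : T ∩ A.1 = ∅ := by
    apply Finset.eq_empty_of_forall_notMem
    intro a ha
    rw [Finset.mem_inter] at ha
    exact (Finset.mem_sdiff.mp (hT ha.1)).2 ha.2
  have hST : Disjoint S T := by
    rw [Finset.disjoint_left]
    intro a haS haT
    exact (Finset.mem_sdiff.mp (hS haS)).2 (hTB haT)
  set C : Finset (Fin v) := S ∪ T with hCdef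
  have hCcard : C.card = k := by
    rw [hCdef, Finset.card_union_of_disjoint hST, hScard, hTcard]; omega
  have hCA : C ∩ A.1 = S := by
    rw [hCdef, Finset.union_inter_distrib_right, hTA,
      Finset.inter_eq_left.mpr hSA, Finset.union_empty]
  have hCB : C ∩ B.1 = T := by
    rw [hCdef, Finset.union_inter_distrib_right, hSB,
      Finset.inter_eq_left.mpr hTB, Finset.empty_union]
  -- choose U outside C ∪ B with |U| = k - 2i
  have hCuB : (C ∪ B.1).card = k + i := by
    have := Finset.card_union_add_card_inter C B.1
    rw [hCB, hCcard, hB, hTcard] at this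
    omega
  obtain ⟨U, hU, hUcard⟩ := Finset.exists_subset_card_eq
    (show k - 2 * i ≤ ((C ∪ B.1)ᶜ : Finset (Fin v)).card by
      rw [Finset.card_compl, Fintype.card_fin, hCuB]; omega)
  have hUCB : ∀ a ∈ U, a ∉ C ∪ B.1 := by
    intro a ha
    have := hU ha
    simpa using this
  set D : Finset (Fin v) := S ∪ (B.1 \ T) ∪ U with hDdef
  have hBTcard : (B.1 \ T).card = i := by
    rw [Finset.card_sdiff_of_subset hTB, hB, hTcard]; omega
  have hSBT : Disjoint S (B.1 \ T) := by
    rw [Finset.disjoint_left]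
    intro a haS haBT
    exact (Finset.mem_sdiff.mp (hS haS)).2 (Finset.mem_sdiff.mp haBT).1
  have hSU : Disjoint (S ∪ (B.1 \ T)) U := by
    rw [Finset.disjoint_right]
    intro a haU haSB
    rcases Finset.mem_union.mp haSB with h | h
    · exact hUCB a haU (Finset.mem_union_left _ (Finset.mem_union_left _ h))
    · exact hUCB a haU (Finset.mem_union_right _ (Finset.mem_sdiff.mp h).1)
  have hDcard : D.card = k := by
    rw [hDdef, Finset.card_union_of_disjoint hSU, Finset.card_union_of_disjoint hSBT,
      hScard, hBTcard, hUcard]; omega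
  have hDB : D ∩ B.1 = B.1 \ T := by
    rw [hDdef, Finset.union_inter_distrib_right, Finset.union_inter_distrib_right, hSB,
      Finset.inter_eq_left.mpr (Finset.sdiff_subset)]
    have : U ∩ B.1 = ∅ := by
      apply Finset.eq_empty_of_forall_notMem
      intro a ha
      rw [Finset.mem_inter] at ha
      exact hUCB a ha.1 (Finset.mem_union_right _ ha.2)
    rw [this, Finset.empty_union, Finset.union_empty]
  have hCD : C ∩ D = S := by
    have hUC : U ∩ C = ∅ := by
      apply Finset.eq_empty_of_forall_notMem
      intro a ha
      rw [Finset.mem_inter] at ha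
      exact hUCB a ha.1 (Finset.mem_union_left _ ha.2)
    rw [hCdef, hDdef, Finset.union_inter_distrib_right]
    have h1 : S ∩ (S ∪ B.1 \ T ∪ U) = S := by
      rw [Finset.inter_eq_left]
      intro a ha
      exact Finset.mem_union_left _ (Finset.mem_union_left _ ha)
    have h2 : T ∩ (S ∪ B.1 \ T ∪ U) = ∅ := by
      apply Finset.eq_empty_of_forall_notMem
      intro a ha
      rw [Finset.mem_inter, Finset.mem_union, Finset.mem_union] at ha
      obtain ⟨haT, (h | h) | h⟩ := ha
      · exact Finset.disjoint_right.mp hST haT h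
      · exact (Finset.mem_sdiff.mp h).2 haT
      · exact hUCB a h (Finset.mem_union_left _ (Finset.mem_union_right _ haT))
    rw [h1, h2, Finset.union_empty]
  -- the three adjacencies
  let Cv : {A : Finset (Fin v) // A.card = k} := ⟨C, hCcard⟩
  let Dv : {A : Finset (Fin v) // A.card = k} := ⟨D, hDcard⟩
  have ne_of_card : ∀ (P Q : {A : Finset (Fin v) // A.card = k}),
      (P.1 ∩ Q.1).card = i → P ≠ Q := by
    intro P Q h heq
    rw [heq, Finset.inter_self, Q.2] at h
    omega
  have adj1 : (genJohnsonGraph v k i).Adj A Cv := by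
    have h : (A.1 ∩ Cv.1).card = i := by
      show (A.1 ∩ C).card = i
      rw [Finset.inter_comm, hCA, hScard]
    exact ⟨ne_of_card A Cv h, h⟩
  have adj2 : (genJohnsonGraph v k i).Adj Cv Dv := by
    have h : (Cv.1 ∩ Dv.1).card = i := by
      show (C ∩ D).card = i
      rw [hCD, hScard]
    exact ⟨ne_of_card Cv Dv h, h⟩
  have adj3 : (genJohnsonGraph v k i).Adj Dv B := by
    have h : (Dv.1 ∩ B.1).card = i := by
      show (D ∩ B.1).card = i
      rw [hDB, hBTcard]
    exact ⟨ne_of_card Dv B h, h⟩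
  let w : (genJohnsonGraph v k i).Walk A B :=
    SimpleGraph.Walk.cons adj1 (SimpleGraph.Walk.cons adj2 (SimpleGraph.Walk.cons adj3
      SimpleGraph.Walk.nil))
  have hle : (genJohnsonGraph v k i).dist A B ≤ 3 := SimpleGraph.dist_le w
  have hreach : (genJohnsonGraph v k i).Reachable A B := ⟨w⟩
  have hge : 3 ≤ (genJohnsonGraph v k i).dist A B := by
    by_contra hlt
    push_neg at hlt
    obtain ⟨p, hp⟩ := hreach.exists_walk_length_eq_dist
    rw [← hp] at hlt
    cases p with
    | nil =>
        have : (A.1 ∩ A.1).card = x := hx ▸ rfl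
        rw [Finset.inter_self, hA] at this
        omega
    | cons h q =>
        cases q with
        | nil => exact absurd h.2 (by omega)
        | cons h' q' =>
            cases q' with
            | nil =>
                -- common neighbor
                rename_i c
                exact no_common_neighbor v k i h2k A.1 B.1 c.1 hA hB c.2
                  (by rw [Finset.inter_comm]; exact h.2) h'.2 hxd
            | cons h'' q'' =>
                simp only [SimpleGraph.Walk.length_cons] at hlt
                omega
  omega
end
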